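/- For (b,c,d,f,g,i) ∈ ℂ⁶ and q = q(b,c,d,f,g,i): if bg − cf ≠ 0 or ci + bf ≠ 0, then dim 𝓩_q ≤ 3. -/
import Mathlib


open Matrix

noncomputable section

/-- The Lie algebra 𝔤 ≅ sp₄(ℂ), realized as the space of 4×4 complex matrices
with rows (A,B,C,D), (E,F,G,C), (H,I,−F,−B), (J,H,−E,−A). -/
def sp4 : Submodule ℂ (Matrix (Fin 4) (Fin 4) ℂ) where
  carrier := {M | M 1 3 = M 0 2 ∧ M 2 2 = -M 1 1 ∧ M 2 3 = -M 0 1 ∧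
    M 3 1 = M 2 0 ∧ M 3 2 = -M 1 0 ∧ M 3 3 = -M 0 0}
  add_mem' := by
    rintro a b ⟨h1, h2, h3, h4, h5, h6⟩ ⟨k1, k2, k3, k4, k5, k6⟩
    simp only [Set.mem_setOf_eq, Matrix.add_apply, h1, h2, h3, h4, h5, h6,
      k1, k2, k3, k4, k5, k6]
    refine ⟨?_, ?_, ?_, ?_, ?_, ?_⟩ <;> first | trivial | ring
  zero_mem' := by
    simp [Set.mem_setOf_eq]
  smul_mem' := by
    rintro c a ⟨h1, h2, h3, h4, h5, h6⟩
    simp only [Set.mem_setOf_eq, Matrix.smul_apply, h1, h2, h3, h4, h5, h6, smul_eq_mul]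
    refine ⟨?_, ?_, ?_, ?_, ?_, ?_⟩ <;> first | trivial | ring

/-- Matrices commuting with a given matrix `q`. -/
def commWith (q : Matrix (Fin 4) (Fin 4) ℂ) : Submodule ℂ (Matrix (Fin 4) (Fin 4) ℂ) where
  carrier := {z | z * q = q * z}
  add_mem' := by
    intro a b ha hb
    simp only [Set.mem_setOf_eq] at *
    rw [add_mul, mul_add, ha, hb]
  zero_mem' := by simp
  smul_mem' := by
    intro c a ha
    simp only [Set.mem_setOf_eq] at *
    rw [smul_mul_assoc, mul_smul_comm, ha]

/-- The centralizer 𝓩_q = {z ∈ 𝔤 : zq = qz}, a ℂ-subspace of 𝔤. -/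
def cent (q : Matrix (Fin 4) (Fin 4) ℂ) : Submodule ℂ (Matrix (Fin 4) (Fin 4) ℂ) :=
  sp4 ⊓ commWith q

/-- The element q(b,c,d,f,g,i) of the Slodowy slice. -/
def qmat (b c d f g i : ℂ) : Matrix (Fin 4) (Fin 4) ℂ :=
  !![0, b, c, d; 0, f, g, c; 0, i, -f, -b; 1, 0, 0, 0]



lemma key_zero (b c d f g i : ℂ)
    (h : b * g - c * f ≠ 0 ∨ c * i + b * f ≠ 0)
    (z : Matrix (Fin 4) (Fin 4) ℂ)
    (hz : z ∈ cent (qmat b c d f g i))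
    (p1 : z 1 0 = 0) (p2 : z 2 0 = 0) (p3 : z 3 0 = 0) : z = 0 := by
  obtain ⟨⟨hs1, hs2, hs3, hs4, hs5, hs6⟩, hc⟩ := hz
  have hc' : z * qmat b c d f g i = qmat b c d f g i * z := hc
  have E : ∀ r c', (z * qmat b c d f g i) r c' = (qmat b c d f g i * z) r c' :=
    fun r c' => by rw [hc']
  have e30 := E 3 0; have e00 := E 0 0; have e10 := E 1 0; have e20 := E 2 0
  have e23 := E 2 3; have e02 := E 0 2; have e11 := E 1 1; have e12 := E 1 2
  have e21 := E 2 1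
  simp [qmat, Matrix.mul_apply, Fin.sum_univ_four] at e30 e00 e10 e20 e23 e02 e11 e12 e21
  -- e30 : z 3 3 = z 0 0 ; with hs6 : z 3 3 = -z 0 0
  have hA : z 0 0 = 0 := by linear_combination (hs6 - e30) / 2
  have hA' : z 3 3 = 0 := by rw [hs6, hA, neg_zero]
  have hD : z 0 3 = 0 := by linear_combination e00 + b * p1 + c * p2 + d * p3
  have hC : z 1 3 = 0 := by linear_combination e10 + f * p1 + g * p2 + c * p3
  have hB : z 2 3 = 0 := by linear_combination e20 + i * p1 - f * p2 - b * p3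
  have hC' : z 0 2 = 0 := by rw [← hs1, hC]
  have hB' : z 0 1 = 0 := by linear_combination hs3 - hB
  have h31 : z 3 1 = 0 := by rw [hs4, p2]
  have h32 : z 3 2 = 0 := by rw [hs5, p1, neg_zero]
  have q1 : b * z 1 1 + c * z 2 1 = 0 := by
    linear_combination e23 + b * hs2 - d * p2 + i * hC - f * hB - b * hA'
  have q2 : c * z 1 1 - b * z 1 2 = 0 := by
    linear_combination e02 + c * hs2 - c * hA - g * hB' + f * hC' + d * hs5 - d * p1
  have q3 : i * z 1 2 - g * z 2 1 = 0 := by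
    linear_combination e11 - b * p1 + c * h31
  have q4 : g * z 1 1 - f * z 1 2 = 0 := by
    linear_combination (e12 + g * hs2 + c * h32 - c * p1) / 2
  have q5 : i * z 1 1 - f * z 2 1 = 0 := by
    linear_combination -(e21 - i * hs2 - b * p2 - b * h31) / 2
  have hFGI : z 1 1 = 0 ∧ z 1 2 = 0 ∧ z 2 1 = 0 := by
    rcases h with h1 | h2
    · have hF : z 1 1 = 0 := by
        have : (b * g - c * f) * z 1 1 = 0 := by linear_combination b * q4 - f * q2
        exact (mul_eq_zero.mp this).resolve_left h1
      have hG : z 1 2 = 0 := by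
        have : (b * g - c * f) * z 1 2 = 0 := by linear_combination c * q4 - g * q2
        exact (mul_eq_zero.mp this).resolve_left h1
      have hI : z 2 1 = 0 := by
        have : (b * g - c * f) * z 2 1 = 0 := by
          linear_combination (-f) * q1 - b * q3 + (f * b) * hF + (b * i) * hG
        exact (mul_eq_zero.mp this).resolve_left h1
      exact ⟨hF, hG, hI⟩
    · have hF : z 1 1 = 0 := by
        have : (c * i + b * f) * z 1 1 = 0 := by linear_combination f * q1 + c * q5
        exact (mul_eq_zero.mp this).resolve_left h2
      have hI : z 2 1 = 0 := by
        have : (c * i + b * f) * z 2 1 = 0 := by linear_combination i * q1 - b * q5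
        exact (mul_eq_zero.mp this).resolve_left h2
      have hG : z 1 2 = 0 := by
        have : (c * i + b * f) * z 1 2 = 0 := by
          linear_combination (-f) * q2 + c * q3 + (c * f) * hF + (c * g) * hI
        exact (mul_eq_zero.mp this).resolve_left h2
      exact ⟨hF, hG, hI⟩
  obtain ⟨hF, hG, hI⟩ := hFGI
  have h22 : z 2 2 = 0 := by rw [hs2, hF, neg_zero]
  ext r c'
  fin_cases r <;> fin_cases c' <;>
    simp_all

theorem slice_dim_le_three (b c d f g i : ℂ)
    (h : b * g - c * f ≠ 0 ∨ c * i + b * f ≠ 0) :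
    Module.finrank ℂ (cent (qmat b c d f g i)) ≤ 3 := by
  classical
  let φ : cent (qmat b c d f g i) →ₗ[ℂ] (Fin 3 → ℂ) :=
    { toFun := fun z => ![z.1 1 0, z.1 2 0, z.1 3 0]
      map_add' := by
        intro x y
        funext j
        fin_cases j <;> simp [Matrix.add_apply]
      map_smul' := by
        intro a x
        funext j
        fin_cases j <;> simp [Matrix.smul_apply] }
  have hinj : Function.Injective φ := by
    rw [← LinearMap.ker_eq_bot, LinearMap.ker_eq_bot']
    intro z hz0
    have h1 : z.1 1 0 = 0 := congrFun hz0 0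
    have h2 : z.1 2 0 = 0 := congrFun hz0 1
    have h3 : z.1 3 0 = 0 := congrFun hz0 2
    exact Subtype.ext (key_zero b c d f g i h z.1 z.2 h1 h2 h3)
  calc Module.finrank ℂ (cent (qmat b c d f g i))
      ≤ Module.finrank ℂ (Fin 3 → ℂ) := LinearMap.finrank_le_finrank_of_injective hinj
    _ = 3 := by simp

end
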